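/- Let X be an L-embedded Banach space with L-projection P : X** → X, let x** be a weak* cluster point of a bounded sequence (x_k) in X, set x = Px** and x_s = x** − x. Then for every ε ∈ (0, ‖x_s‖) there is a subsequence (x_{k_n}) such that ‖∑_{i=1}^n α_i (x_{k_i} − x)‖ ≥ (‖x_s‖ − ε) ∑_{i=1}^n |α_i| for all n and all real α_1,…,α_n. -/

import Mathlib

open Filter Topology NormedSpace

lemma aux_exists_seq_of_step (P : ℕ → (ℕ → ℕ) → Prop)
    (h0 : P 0 (fun _ => 0))
    (hstep : ∀ n k, P n k → ∃ m, P (n + 1) (Function.update k n m))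
    (hloc : ∀ n k k', (∀ i, i < n → k i = k' i) → P n k → P n k') :
    ∃ φ : ℕ → ℕ, ∀ n, P n φ := by
  choose m hm using hstep
  let f : ∀ _ : ℕ, {k : ℕ → ℕ // P _ k} :=
    fun n => Nat.rec (motive := fun n => {k : ℕ → ℕ // P n k}) ⟨fun _ => 0, h0⟩
      (fun n ih => ⟨Function.update ih.1 n (m n ih.1 ih.2), hm n ih.1 ih.2⟩) n
  have key : ∀ n i, i < n → (f n).1 i = (f (i + 1)).1 i := by
    intro n
    induction n with
    | zero => omega
    | succ n ih =>
      intro i hi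
      rcases Nat.lt_succ_iff_lt_or_eq.mp hi with h | h
      · have : (f (n + 1)).1 i = (f n).1 i := Function.update_of_ne (by omega) _ _
        rw [this, ih i h]
      · subst h; rfl
  refine ⟨fun i => (f (i + 1)).1 i, fun n => ?_⟩
  exact hloc n (f n).1 _ (fun i hi => key n i hi) (f n).2
lemma aux_norming {X : Type*} [NormedAddCommGroup X] [NormedSpace ℝ X]
    (g : StrongDual ℝ (StrongDual ℝ X)) (δ : ℝ) (hδ : 0 < δ) :
    ∃ f : StrongDual ℝ X, ‖f‖ ≤ 1 ∧ ‖g‖ - δ < g f := by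
  obtain ⟨f, hf1, hf2⟩ := g.exists_lt_apply_of_lt_opNorm (show ‖g‖ - δ < ‖g‖ by linarith)
  rcases le_or_gt (g f) 0 with h | h
  · refine ⟨-f, by simpa using hf1.le, ?_⟩
    rw [map_neg]
    rw [Real.norm_eq_abs, abs_of_nonpos h] at hf2
    linarith
  · refine ⟨f, hf1.le, ?_⟩
    rw [Real.norm_eq_abs, abs_of_pos h] at hf2
    linarith

lemma aux_step {X : Type*} [NormedAddCommGroup X] [NormedSpace ℝ X]
    (x : ℕ → X) (v : X) (xs : StrongDual ℝ (StrongDual ℝ X)) (r C ε : ℝ)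
    (hLC : ∀ (u : X) (β : ℝ), ‖inclusionInDoubleDual ℝ X u + β • xs‖ = ‖u‖ + |β| * r)
    (hsel : ∀ (S : Finset (StrongDual ℝ X)) (δ : ℝ), 0 < δ → ∀ N : ℕ,
      ∃ j, N ≤ j ∧ ∀ f ∈ S, |f (x j) - (f v + xs f)| < δ)
    (hC1 : 1 ≤ C) (hCe : ∀ j, ‖x j - v‖ ≤ C) (hε : 0 < ε)
    (n : ℕ) (k : ℕ → ℕ)
    (hk : ∀ α : ℕ → ℝ, (r - (ε - ε / 2 ^ n)) * ∑ i ∈ Finset.range n, |α i| ≤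
      ‖∑ i ∈ Finset.range n, α i • (x (k i) - v)‖) :
    ∃ m, (Finset.range n).sup k < m ∧ ∀ α : ℕ → ℝ,
      (r - (ε - ε / 2 ^ (n + 1))) * ∑ i ∈ Finset.range (n + 1), |α i| ≤
        ‖(∑ i ∈ Finset.range n, α i • (x (k i) - v)) + α n • (x m - v)‖ := by
  classical
  have hγ : (0:ℝ) < ε / 2 ^ (n + 1) := by positivity
  have hC0 : (0:ℝ) < C := by linarith
  have hden : (0:ℝ) < 3 + (n + 1) * C := by positivity
  set δ := ε / 2 ^ (n + 1) / (3 + (n + 1) * C) with hδdef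
  have hδ : 0 < δ := div_pos hγ hden
  -- the compact coefficient set
  set K : Set (ℕ → ℝ) := {p | (∀ i, |p i| ≤ 1) ∧ (∀ i, n + 1 ≤ i → p i = 0) ∧
      ∑ i ∈ Finset.range (n + 1), |p i| = 1} with hK
  have hKcpt : IsCompact K := by
    have h1 : IsCompact (Set.univ.pi fun _ : ℕ => Set.Icc (-1 : ℝ) 1) :=
      isCompact_univ_pi fun _ => isCompact_Icc
    refine h1.of_isClosed_subset ?_ ?_
    · have : K = (⋂ i, {p : ℕ → ℝ | |p i| ≤ 1}) ∩
          ((⋂ i, ⋂ _ : n + 1 ≤ i, {p : ℕ → ℝ | p i = 0}) ∩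
            {p : ℕ → ℝ | ∑ i ∈ Finset.range (n + 1), |p i| = 1}) := by
        ext p
        simp only [hK, Set.mem_setOf_eq, Set.mem_inter_iff, Set.mem_iInter]
      rw [this]
      refine IsClosed.inter (isClosed_iInter fun i => ?_) (IsClosed.inter ?_ ?_)
      · exact isClosed_le ((continuous_apply i).abs) continuous_const
      · exact isClosed_iInter fun i => isClosed_iInter fun _ =>
          isClosed_eq (continuous_apply i) continuous_const
      · exact isClosed_eq (continuous_finset_sum _ fun i _ => (continuous_apply i).abs)
          continuous_const
    · intro p hp
      rw [Set.mem_univ_pi]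
      intro i
      exact abs_le.mp (hp.1 i)
  -- norming functionals
  have hzf : ∀ p : ℕ → ℝ, ∃ f : StrongDual ℝ X, ‖f‖ ≤ 1 ∧
      ‖inclusionInDoubleDual ℝ X (∑ i ∈ Finset.range n, p i • (x (k i) - v)) + p n • xs‖ - δ <
        (inclusionInDoubleDual ℝ X (∑ i ∈ Finset.range n, p i • (x (k i) - v)) + p n • xs) f :=
    fun p => aux_norming _ δ hδ
  choose f hf1 hf2 using hzf
  -- finite subcover
  obtain ⟨T, hTK, hTcover⟩ := hKcpt.elim_nhds_subcover
      (fun p => {q : ℕ → ℝ | ∀ i ∈ Finset.range (n + 1), |q i - p i| < δ}) (by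
    intro p _
    have hopen : IsOpen {q : ℕ → ℝ | ∀ i ∈ Finset.range (n + 1), |q i - p i| < δ} := by
      have : {q : ℕ → ℝ | ∀ i ∈ Finset.range (n + 1), |q i - p i| < δ} =
          ⋂ i ∈ Finset.range (n + 1), (fun q : ℕ → ℝ => q i) ⁻¹' Metric.ball (p i) δ := by
        ext q; simp [Real.dist_eq]
      rw [this]
      exact isOpen_biInter_finset fun i _ =>
        (Metric.isOpen_ball).preimage (continuous_apply i)
    exact hopen.mem_nhds (by simp [hδ]))
  -- select the next index
  obtain ⟨m, hmN, hmS⟩ := hsel (T.image f) δ hδ ((Finset.range n).sup k + 1)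
  have hfe : ∀ q ∈ T, |f q (x m - v) - xs (f q)| < δ := by
    intro q hq
    have h := hmS (f q) (Finset.mem_image_of_mem f hq)
    have heq : f q (x m) - (f q v + xs (f q)) = f q (x m - v) - xs (f q) := by
      rw [map_sub]; ring
    rw [heq] at h
    exact h
  -- claim 1 : the bound on the net points
  have claim1 : ∀ q ∈ T, (r - (ε - ε / 2 ^ n)) - 2 * δ ≤
      ‖(∑ i ∈ Finset.range n, q i • (x (k i) - v)) + q n • (x m - v)‖ := by
    intro q hq
    obtain ⟨hq1, hq2, hq3⟩ := hTK q hq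
    have e1 : f q ((∑ i ∈ Finset.range n, q i • (x (k i) - v)) + q n • (x m - v)) ≤
        ‖(∑ i ∈ Finset.range n, q i • (x (k i) - v)) + q n • (x m - v)‖ := by
      calc f q ((∑ i ∈ Finset.range n, q i • (x (k i) - v)) + q n • (x m - v))
          ≤ |f q ((∑ i ∈ Finset.range n, q i • (x (k i) - v)) + q n • (x m - v))| :=
            le_abs_self _
        _ ≤ ‖f q‖ * ‖(∑ i ∈ Finset.range n, q i • (x (k i) - v)) + q n • (x m - v)‖ := by
            rw [← Real.norm_eq_abs]; exact (f q).le_opNorm _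
        _ ≤ 1 * ‖(∑ i ∈ Finset.range n, q i • (x (k i) - v)) + q n • (x m - v)‖ :=
            mul_le_mul_of_nonneg_right (hf1 q) (norm_nonneg _)
        _ = _ := one_mul _
    have e2 : f q ((∑ i ∈ Finset.range n, q i • (x (k i) - v)) + q n • (x m - v)) =
        (inclusionInDoubleDual ℝ X (∑ i ∈ Finset.range n, q i • (x (k i) - v)) + q n • xs) (f q)
          + q n * (f q (x m - v) - xs (f q)) := by
      simp only [map_add, map_smul, smul_eq_mul, ContinuousLinearMap.add_apply,
        ContinuousLinearMap.coe_smul', Pi.smul_apply, dual_def]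
      ring
    have e3 := hf2 q
    have e4 : -(1 * δ) ≤ q n * (f q (x m - v) - xs (f q)) := by
      have h1 : |q n * (f q (x m - v) - xs (f q))| ≤ 1 * δ := by
        rw [abs_mul]
        exact mul_le_mul (hq1 n) (hfe q hq).le (abs_nonneg _) zero_le_one
      linarith [neg_abs_le (q n * (f q (x m - v) - xs (f q)))]
    have e5 := hLC (∑ i ∈ Finset.range n, q i • (x (k i) - v)) (q n)
    have e6 := hk q
    have e7 : (r - (ε - ε / 2 ^ n)) * |q n| ≤ |q n| * r := by
      have h2 : ε / 2 ^ n ≤ ε := div_le_self hε.le (one_le_pow₀ (by norm_num))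
      nlinarith [abs_nonneg (q n)]
    have e8 : ∑ i ∈ Finset.range n, |q i| + |q n| = 1 := by
      rw [← Finset.sum_range_succ]; exact hq3
    have e9 : (r - (ε - ε / 2 ^ n)) * (∑ i ∈ Finset.range n, |q i|) +
        (r - (ε - ε / 2 ^ n)) * |q n| = r - (ε - ε / 2 ^ n) := by
      rw [← mul_add, e8, mul_one]
    linarith [e1, e2, e3, e4, e5, e6, e7, e9]
  -- step from net points to all of K
  have hεstep : ε - ε / 2 ^ (n + 1) = (ε - ε / 2 ^ n) + ε / 2 ^ (n + 1) := by
    have h2 : (2:ℝ) ^ (n + 1) = 2 ^ n * 2 := pow_succ 2 n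
    rw [h2]; ring
  have hδγ : δ * (2 + (↑n + 1) * C) ≤ ε / 2 ^ (n + 1) := by
    rw [hδdef, div_mul_eq_mul_div, div_le_iff₀ hden]
    nlinarith [hγ.le]
  have claim2 : ∀ p ∈ K, r - (ε - ε / 2 ^ (n + 1)) ≤
      ‖(∑ i ∈ Finset.range n, p i • (x (k i) - v)) + p n • (x m - v)‖ := by
    intro p hp
    obtain ⟨q, hqT, hpq⟩ := Set.mem_iUnion₂.mp (hTcover hp)
    have hd : ∀ i ∈ Finset.range (n + 1), |p i - q i| < δ := hpq
    have hdw : ‖(∑ i ∈ Finset.range n, p i • (x (k i) - v)) -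
        (∑ i ∈ Finset.range n, q i • (x (k i) - v))‖ ≤ n * (δ * C) := by
      have heq : (∑ i ∈ Finset.range n, p i • (x (k i) - v)) -
          (∑ i ∈ Finset.range n, q i • (x (k i) - v)) =
          ∑ i ∈ Finset.range n, (p i - q i) • (x (k i) - v) := by
        rw [← Finset.sum_sub_distrib]
        exact Finset.sum_congr rfl fun i _ => (sub_smul _ _ _).symm
      rw [heq]
      calc ‖∑ i ∈ Finset.range n, (p i - q i) • (x (k i) - v)‖
          ≤ ∑ i ∈ Finset.range n, ‖(p i - q i) • (x (k i) - v)‖ := norm_sum_le _ _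
        _ ≤ ∑ _i ∈ Finset.range n, δ * C := Finset.sum_le_sum (fun i hi => by
            rw [norm_smul, Real.norm_eq_abs]
            refine mul_le_mul (hd i ?_).le (hCe (k i)) (norm_nonneg _) hδ.le
            simp only [Finset.mem_range] at hi ⊢; omega)
        _ = n * (δ * C) := by rw [Finset.sum_const, Finset.card_range, nsmul_eq_mul]
    have hde : ‖(p n - q n) • (x m - v)‖ ≤ δ * C := by
      rw [norm_smul, Real.norm_eq_abs]
      exact mul_le_mul (hd n (Finset.self_mem_range_succ n)).le (hCe m) (norm_nonneg _) hδ.le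
    have htri : ‖(∑ i ∈ Finset.range n, q i • (x (k i) - v)) + q n • (x m - v)‖ -
        ‖(∑ i ∈ Finset.range n, p i • (x (k i) - v)) + p n • (x m - v)‖ ≤
        n * (δ * C) + δ * C := by
      have h1 : ‖((∑ i ∈ Finset.range n, q i • (x (k i) - v)) + q n • (x m - v)) -
          ((∑ i ∈ Finset.range n, p i • (x (k i) - v)) + p n • (x m - v))‖ ≤
          n * (δ * C) + δ * C := by
        have heq : ((∑ i ∈ Finset.range n, q i • (x (k i) - v)) + q n • (x m - v)) -
            ((∑ i ∈ Finset.range n, p i • (x (k i) - v)) + p n • (x m - v)) =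
            -(((∑ i ∈ Finset.range n, p i • (x (k i) - v)) -
              (∑ i ∈ Finset.range n, q i • (x (k i) - v))) + (p n - q n) • (x m - v)) := by
          rw [sub_smul]; abel
        rw [heq, norm_neg]
        calc ‖_ + _‖ ≤ _ := norm_add_le _ _
          _ ≤ n * (δ * C) + δ * C := add_le_add hdw hde
      have h2 := norm_sub_norm_le
        ((∑ i ∈ Finset.range n, q i • (x (k i) - v)) + q n • (x m - v))
        ((∑ i ∈ Finset.range n, p i • (x (k i) - v)) + p n • (x m - v))
      linarith
    have h1 := claim1 q hqT
    have hfin : 2 * δ + (n * (δ * C) + δ * C) ≤ ε / 2 ^ (n + 1) := by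
      have expand : δ * (2 + (↑n + 1) * C) = 2 * δ + (↑n * (δ * C) + δ * C) := by ring
      linarith [hδγ]
    rw [hεstep]
    linarith [h1, htri, hfin]
  -- conclusion
  refine ⟨m, by omega, ?_⟩
  intro α
  set s := ∑ i ∈ Finset.range (n + 1), |α i| with hs
  have hs0 : 0 ≤ s := Finset.sum_nonneg fun i _ => abs_nonneg _
  rcases eq_or_lt_of_le hs0 with hs' | hs'
  · rw [← hs', mul_zero]; exact norm_nonneg _
  · set p : ℕ → ℝ := fun i => if i < n + 1 then α i / s else 0 with hp
    have hαle : ∀ i ∈ Finset.range (n + 1), |α i| ≤ s :=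
      fun i hi => Finset.single_le_sum (f := fun j => |α j|) (fun j _ => abs_nonneg _) hi
    have hpK : p ∈ K := by
      refine ⟨?_, ?_, ?_⟩
      · intro i
        by_cases h : i < n + 1
        · simp only [hp, if_pos h, abs_div, abs_of_pos hs']
          rw [div_le_one hs']
          exact hαle i (Finset.mem_range.mpr h)
        · simp [hp, if_neg h, show ¬ i ≤ n by omega]
      · intro i hi; simp [hp, Nat.not_lt.mpr hi, show ¬ i ≤ n by omega]
      · have hcongr : ∀ i ∈ Finset.range (n + 1), |p i| = |α i| / s := by
          intro i hi
          simp only [hp, if_pos (Finset.mem_range.mp hi), abs_div, abs_of_pos hs']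
        rw [Finset.sum_congr rfl hcongr, ← Finset.sum_div, ← hs, div_self hs'.ne']
    have h2 := claim2 p hpK
    have hwp : (∑ i ∈ Finset.range n, p i • (x (k i) - v)) + p n • (x m - v) =
        (1 / s) • ((∑ i ∈ Finset.range n, α i • (x (k i) - v)) + α n • (x m - v)) := by
      rw [smul_add]
      congr 1
      · rw [Finset.smul_sum]
        refine Finset.sum_congr rfl fun i hi => ?_
        have hpi : p i = α i / s := by
          have : i < n + 1 := by have := Finset.mem_range.mp hi; omega
          simp [hp, this, show i ≤ n by omega]
        rw [hpi, smul_smul]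
        congr 1
        rw [one_div, div_eq_mul_inv]; ring
      · have hpn : p n = α n / s := by simp [hp]
        rw [hpn, smul_smul]
        congr 1
        rw [one_div, div_eq_mul_inv]; ring
    rw [hwp, norm_smul, Real.norm_eq_abs, abs_of_pos (by positivity : (0:ℝ) < 1 / s)] at h2
    have h3 := mul_le_mul_of_nonneg_right h2 hs0
    have hss : 1 / s * ‖(∑ i ∈ Finset.range n, α i • (x (k i) - v)) + α n • (x m - v)‖ * s =
        ‖(∑ i ∈ Finset.range n, α i • (x (k i) - v)) + α n • (x m - v)‖ := by
      field_simp
    linarith [h3]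

/-- The set of weak* cluster points in the bidual of a sequence `(x k)` in `X`. -/
def weakStarClusterPoints {X : Type*} [NormedAddCommGroup X] [NormedSpace ℝ X]
    (x : ℕ → X) : Set (StrongDual ℝ (StrongDual ℝ X)) :=
  {y | MapClusterPt (StrongDual.toWeakDual y) atTop
        fun k => StrongDual.toWeakDual (inclusionInDoubleDual ℝ X (x k))}

/-- Let `X` be an `L`-embedded Banach space with `L`-projection
`P : X** → X`, let `y = x**` be a weak* cluster point of a bounded sequence `(x_k)` in `X`,
`v ∈ X` the point with `ι v = P x**` and `x_s = x** − P x**`. Then for every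
`ε ∈ (0, ‖x_s‖)` there is a subsequence `(x_{k_n})` such that
`‖∑_{i=1}^n α_i (x_{k_i} − v)‖ ≥ (‖x_s‖ − ε) ∑_{i=1}^n |α_i|` for all `n` and all real
`α_1, …, α_n`. -/
theorem statement19 {X : Type*} [NormedAddCommGroup X] [NormedSpace ℝ X] [CompleteSpace X]
    (P : StrongDual ℝ (StrongDual ℝ X) →ₗ[ℝ] StrongDual ℝ (StrongDual ℝ X))
    (hProj : ∀ y, P (P y) = P y)
    (hRange : Set.range P = Set.range (fun v : X => inclusionInDoubleDual ℝ X v))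
    (hL : ∀ y, ‖y‖ = ‖P y‖ + ‖y - P y‖)
    (x : ℕ → X) (hb : ∃ M : ℝ, ∀ k, ‖x k‖ ≤ M)
    (y : StrongDual ℝ (StrongDual ℝ X)) (hy : y ∈ weakStarClusterPoints x)
    (v : X) (hv : inclusionInDoubleDual ℝ X v = P y)
    (ε : ℝ) (hε : 0 < ε) (hε' : ε < ‖y - P y‖) :
    ∃ φ : ℕ → ℕ, StrictMono φ ∧
      ∀ (n : ℕ) (α : ℕ → ℝ),
        (‖y - P y‖ - ε) * ∑ i ∈ Finset.range n, |α i| ≤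
          ‖∑ i ∈ Finset.range n, α i • (x (φ i) - v)‖ := by
  classical
  simp only [weakStarClusterPoints, Set.mem_setOf_eq] at hy
  obtain ⟨M, hM⟩ := hb
  -- basic consequences of the L-projection
  have hJnorm : ∀ u : X, ‖inclusionInDoubleDual ℝ X u‖ = ‖u‖ := fun u =>
    (inclusionInDoubleDualLi ℝ (E := X)).norm_map u
  have hPι : ∀ u : X, P (inclusionInDoubleDual ℝ X u) = inclusionInDoubleDual ℝ X u := by
    intro u
    have : inclusionInDoubleDual ℝ X u ∈ Set.range P := by
      rw [hRange]; exact ⟨u, rfl⟩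
    obtain ⟨z, hz⟩ := this
    rw [← hz, hProj]
  have hPxs : P (y - P y) = 0 := by rw [map_sub P y (P y), hProj, sub_self]
  have hLC : ∀ (u : X) (β : ℝ),
      ‖inclusionInDoubleDual ℝ X u + β • (y - P y)‖ = ‖u‖ + |β| * ‖y - P y‖ := by
    intro u β
    have h1 : P (inclusionInDoubleDual ℝ X u + β • (y - P y)) = inclusionInDoubleDual ℝ X u := by
      rw [map_add, map_smul, hPι, hPxs, smul_zero, add_zero]
    have h2 := hL (inclusionInDoubleDual ℝ X u + β • (y - P y))
    rw [h1, add_sub_cancel_left (G := StrongDual ℝ (StrongDual ℝ X))] at h2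
    rw [h2, hJnorm, ← Real.norm_eq_abs]
    exact congrArg (‖u‖ + ·) (@norm_smul ℝ (StrongDual ℝ (StrongDual ℝ X)) _ _ _ NormedSpace.toNormSMulClass β (y - P y))
  -- extraction of terms close to `y` on finitely many functionals
  have hsel : ∀ (S : Finset (StrongDual ℝ X)) (δ : ℝ), 0 < δ → ∀ N : ℕ,
      ∃ j, N ≤ j ∧ ∀ f ∈ S, |f (x j) - (f v + (y - P y) f)| < δ := by
    intro S δ hδ N
    have hy' := mapClusterPt_iff_frequently.mp hy
    have hU : (⋂ f ∈ S, (fun z : WeakDual ℝ (StrongDual ℝ X) => z f) ⁻¹' Metric.ball (y f) δ)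
        ∈ 𝓝 (StrongDual.toWeakDual y) := by
      rw [Filter.biInter_finset_mem]
      intro f _
      exact (WeakDual.eval_continuous f).continuousAt.preimage_mem_nhds
        (Metric.ball_mem_nhds _ hδ)
    obtain ⟨j, hj1, hj2⟩ := (Filter.frequently_atTop.mp (hy' _ hU)) N
    refine ⟨j, hj1, fun f hf => ?_⟩
    have h := Set.mem_iInter₂.mp hj2 f hf
    have h' : |inclusionInDoubleDual ℝ X (x j) f - y f| < δ := by
      simpa [Real.dist_eq] using h
    have hyf : y f = f v + (y - P y) f := by
      have h1 : f v = (P y) f := by rw [← hv, dual_def]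
      rw [ContinuousLinearMap.sub_apply, ← h1]
      ring
    rw [dual_def, hyf] at h'
    exact h'
  -- the constant bounding the sequence
  set C := max M 0 + ‖v‖ + 1 with hC
  have hC1 : 1 ≤ C := by
    have h1 : (0:ℝ) ≤ max M 0 := le_max_right M 0
    have h2 := norm_nonneg v
    rw [hC]; linarith
  have hCe : ∀ j : ℕ, ‖x j - v‖ ≤ C := by
    intro j
    have h1 := norm_sub_le (x j) v
    have h2 := hM j
    have h3 : M ≤ max M 0 := le_max_left M 0
    rw [hC]; linarith
  -- the inductive predicate
  set Q : ℕ → (ℕ → ℕ) → Prop := fun n k =>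
    (∀ i j, i < j → j < n → k i < k j) ∧
    ∀ α : ℕ → ℝ, (‖y - P y‖ - (ε - ε / 2 ^ n)) * ∑ i ∈ Finset.range n, |α i| ≤
      ‖∑ i ∈ Finset.range n, α i • (x (k i) - v)‖ with hQ
  have h0 : Q 0 (fun _ => 0) := by
    constructor
    · intro i j _ hj; omega
    · intro α; simp
  have hloc : ∀ n k k', (∀ i, i < n → k i = k' i) → Q n k → Q n k' := by
    intro n k k' hkk hQk
    constructor
    · intro i j hij hj
      rw [← hkk i (by omega), ← hkk j hj]
      exact hQk.1 i j hij hj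
    · intro α
      have heq : ∑ i ∈ Finset.range n, α i • (x (k' i) - v) =
          ∑ i ∈ Finset.range n, α i • (x (k i) - v) :=
        Finset.sum_congr rfl fun i hi => by rw [hkk i (Finset.mem_range.mp hi)]
      rw [heq]
      exact hQk.2 α
  have hstep : ∀ n k, Q n k → ∃ m, Q (n + 1) (Function.update k n m) := by
    intro n k hk
    obtain ⟨m, hm1, hm2⟩ := aux_step x v (y - P y) ‖y - P y‖ C ε hLC hsel hC1 hCe hε n k hk.2
    refine ⟨m, ?_, ?_⟩
    · intro i j hij hj
      rcases Nat.lt_succ_iff_lt_or_eq.mp hj with h | h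
      · rw [Function.update_of_ne (by omega), Function.update_of_ne (by omega)]
        exact hk.1 i j hij h
      · rw [h, Function.update_of_ne (show i ≠ n by omega), Function.update_self]
        have h1 : k i ≤ (Finset.range n).sup k := Finset.le_sup (Finset.mem_range.mpr (by omega))
        omega
    · intro α
      have hsum_eq : ∑ i ∈ Finset.range (n + 1), α i • (x (Function.update k n m i) - v) =
          (∑ i ∈ Finset.range n, α i • (x (k i) - v)) + α n • (x m - v) := by
        rw [Finset.sum_range_succ, Function.update_self]
        congr 1
        exact Finset.sum_congr rfl fun i hi => by
          rw [Function.update_of_ne (Nat.ne_of_lt (Finset.mem_range.mp hi))]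
      rw [hsum_eq]
      exact hm2 α
  obtain ⟨φ, hφ⟩ := aux_exists_seq_of_step Q h0 hstep hloc
  refine ⟨φ, fun i j hij => (hφ (j + 1)).1 i j hij (Nat.lt_succ_self j), fun n α => ?_⟩
  refine le_trans ?_ ((hφ n).2 α)
  refine mul_le_mul_of_nonneg_right ?_ (Finset.sum_nonneg fun i _ => abs_nonneg _)
  have h2 : (0:ℝ) ≤ ε / 2 ^ n := by positivity
  linarith
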